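/- Let G be a finite abelian group with |G| = m and let A ⊆ G. If R_A(g) ≤ 5 for all g ∈ G, then |S_0| + |S_4| ≥ (1/2)m − 3|A| + 1/2, where |S_0| and |S_4| denote the number of elements g ∈ G with R_A(g) = 0 and R_A(g) = 4, respectively. -/
import Mathlib

/-- `repFn A g` is the number of ordered pairs `(a, a') ∈ A × A` with `a + a' = g`. -/
def repFn {G : Type*} [AddCommGroup G] [DecidableEq G] (A : Finset G) (g : G) : ℕ :=
  ((A ×ˢ A).filter fun p => p.1 + p.2 = g).card

/-- `diffFn A d` is the number of ordered pairs `(a, a') ∈ A × A` with `a - a' = d`. -/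
def diffFn {G : Type*} [AddCommGroup G] [DecidableEq G] (A : Finset G) (d : G) : ℕ :=
  ((A ×ˢ A).filter fun p => p.1 - p.2 = d).card

section Aux

variable {G : Type*} [AddCommGroup G] [Fintype G] [DecidableEq G] (A : Finset G)

lemma sum_repFn : ∑ g : G, repFn A g = A.card * A.card := by
  have := Finset.card_eq_sum_card_fiberwise
    (f := fun p : G × G => p.1 + p.2) (s := A ×ˢ A) (t := Finset.univ)
    (fun x _ => Finset.mem_univ _)
  rw [Finset.card_product] at this
  exact this.symm

lemma sum_diffFn : ∑ d : G, diffFn A d = A.card * A.card := by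
  have := Finset.card_eq_sum_card_fiberwise
    (f := fun p : G × G => p.1 - p.2) (s := A ×ˢ A) (t := Finset.univ)
    (fun x _ => Finset.mem_univ _)
  rw [Finset.card_product] at this
  exact this.symm

lemma diffFn_zero : diffFn A 0 = A.card := by
  unfold diffFn
  rw [show ((A ×ˢ A).filter fun p => p.1 - p.2 = 0) = A.image (fun a => (a, a)) from ?_]
  · rw [Finset.card_image_of_injective]
    intro a b hab
    exact (Prod.mk.injEq _ _ _ _).mp hab |>.1
  · ext ⟨x, y⟩
    simp only [Finset.mem_filter, Finset.mem_product, Finset.mem_image, sub_eq_zero,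
      Prod.mk.injEq]
    constructor
    · rintro ⟨⟨hx, _⟩, rfl⟩
      exact ⟨x, hx, rfl, rfl⟩
    · rintro ⟨a, ha, rfl, rfl⟩
      exact ⟨⟨ha, ha⟩, rfl⟩

/-- The energy identity: `∑ R(g)² = ∑ r⁻(d)²`. -/
lemma energy_identity :
    ∑ g : G, (repFn A g) ^ 2 = ∑ d : G, (diffFn A d) ^ 2 := by
  classical
  set Q := (A ×ˢ A) ×ˢ (A ×ˢ A) with hQ
  have hsum : ∑ g : G, (repFn A g) ^ 2 =
      (Q.filter fun q => q.1.1 + q.1.2 = q.2.1 + q.2.2).card := by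
    have hfib := Finset.card_eq_sum_card_fiberwise
      (f := fun q : (G × G) × (G × G) => q.1.1 + q.1.2)
      (s := Q.filter fun q => q.1.1 + q.1.2 = q.2.1 + q.2.2) (t := Finset.univ)
      (fun x _ => Finset.mem_univ _)
    rw [hfib]
    refine Finset.sum_congr rfl fun g _ => ?_
    have hset : ((Q.filter fun q => q.1.1 + q.1.2 = q.2.1 + q.2.2).filter
        fun q => q.1.1 + q.1.2 = g)
        = ((A ×ˢ A).filter fun p => p.1 + p.2 = g) ×ˢ
          ((A ×ˢ A).filter fun p => p.1 + p.2 = g) := by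
      ext ⟨p, r⟩
      simp only [Finset.mem_filter, Finset.mem_product, hQ]
      constructor
      · rintro ⟨⟨⟨hp, hr⟩, heq⟩, hg⟩
        exact ⟨⟨hp, hg⟩, hr, heq ▸ hg⟩
      · rintro ⟨⟨hp, hg1⟩, hr, hg2⟩
        exact ⟨⟨⟨hp, hr⟩, hg1.trans hg2.symm⟩, hg1⟩
    rw [hset, Finset.card_product, repFn, sq]
  have hsum' : ∑ d : G, (diffFn A d) ^ 2 =
      (Q.filter fun q => q.1.1 - q.1.2 = q.2.1 - q.2.2).card := by
    have hfib := Finset.card_eq_sum_card_fiberwise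
      (f := fun q : (G × G) × (G × G) => q.1.1 - q.1.2)
      (s := Q.filter fun q => q.1.1 - q.1.2 = q.2.1 - q.2.2) (t := Finset.univ)
      (fun x _ => Finset.mem_univ _)
    rw [hfib]
    refine Finset.sum_congr rfl fun d _ => ?_
    have hset : ((Q.filter fun q => q.1.1 - q.1.2 = q.2.1 - q.2.2).filter
        fun q => q.1.1 - q.1.2 = d)
        = ((A ×ˢ A).filter fun p => p.1 - p.2 = d) ×ˢ
          ((A ×ˢ A).filter fun p => p.1 - p.2 = d) := by
      ext ⟨p, r⟩
      simp only [Finset.mem_filter, Finset.mem_product, hQ]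
      constructor
      · rintro ⟨⟨⟨hp, hr⟩, heq⟩, hg⟩
        exact ⟨⟨hp, hg⟩, hr, heq ▸ hg⟩
      · rintro ⟨⟨hp, hg1⟩, hr, hg2⟩
        exact ⟨⟨⟨hp, hr⟩, hg1.trans hg2.symm⟩, hg1⟩
    rw [hset, Finset.card_product, diffFn, sq]
  rw [hsum, hsum']
  refine Finset.card_bij'
    (fun q _ => ((q.1.1, q.2.1), (q.2.2, q.1.2)))
    (fun q _ => ((q.1.1, q.2.2), (q.1.2, q.2.1))) ?_ ?_ ?_ ?_
  · rintro ⟨⟨a, b⟩, ⟨c, e⟩⟩ hq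
    simp only [Finset.mem_filter, Finset.mem_product, hQ] at hq ⊢
    obtain ⟨⟨⟨ha, hb⟩, hc, he⟩, heq⟩ := hq
    refine ⟨⟨⟨ha, hc⟩, ⟨he, hb⟩⟩, ?_⟩
    have heq' : a + b = c + e := heq
    show a - c = e - b
    rw [sub_eq_sub_iff_add_eq_add, heq']
    abel
  · rintro ⟨⟨a, c⟩, ⟨e, b⟩⟩ hq
    simp only [Finset.mem_filter, Finset.mem_product, hQ] at hq ⊢
    obtain ⟨⟨⟨ha, hc⟩, he, hb⟩, heq⟩ := hq
    refine ⟨⟨⟨ha, hb⟩, ⟨hc, he⟩⟩, ?_⟩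
    have heq' : a - c = e - b := heq
    show a + b = c + e
    rw [sub_eq_sub_iff_add_eq_add] at heq'
    rw [heq']
    abel
  · rintro ⟨⟨a, b⟩, ⟨c, e⟩⟩ _
    rfl
  · rintro ⟨⟨a, c⟩, ⟨e, b⟩⟩ _
    rfl

lemma even_repFn_of_not_double {g : G} (hg : ∀ a ∈ A, a + a ≠ g) :
    Even (repFn A g) := by
  classical
  have h0 : ((repFn A g : ℕ) : ZMod 2) = 0 := by
    unfold repFn
    rw [Finset.card_eq_sum_ones, Nat.cast_sum]
    refine Finset.sum_involution (fun p _ => (p.2, p.1)) ?_ ?_ ?_ ?_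
    · intro _ _
      decide
    · intro p hp _ hcontra
      simp only [Finset.mem_filter, Finset.mem_product] at hp
      have h2 : p.2 = p.1 := congrArg Prod.fst hcontra
      exact hg p.1 hp.1.1 (h2 ▸ hp.2)
    · intro p hp
      simp only [Finset.mem_filter, Finset.mem_product] at hp ⊢
      exact ⟨⟨hp.1.2, hp.1.1⟩, by rw [add_comm]; exact hp.2⟩
    · intro p hp
      rfl
  rw [Nat.even_iff]
  have h2 := (ZMod.natCast_eq_zero_iff _ 2).mp h0
  omega

lemma card_odd_le : (Finset.univ.filter fun g : G => Odd (repFn A g)).card ≤ A.card := by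
  classical
  have hsub : (Finset.univ.filter fun g : G => Odd (repFn A g))
      ⊆ A.image (fun a => a + a) := by
    intro g hgmem
    simp only [Finset.mem_filter] at hgmem
    by_contra hc
    simp only [Finset.mem_image, not_exists] at hc
    have : ∀ a ∈ A, a + a ≠ g := by
      intro a ha
      intro hEq
      exact hc a ⟨ha, hEq⟩
    exact Nat.not_even_iff_odd.mpr hgmem.2 (even_repFn_of_not_double A this)
  calc (Finset.univ.filter fun g : G => Odd (repFn A g)).card
      ≤ (A.image (fun a => a + a)).card := Finset.card_le_card hsub
    _ ≤ A.card := Finset.card_image_le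

end Aux

lemma three_mul_sub_two_le_sq (n : ℕ) : 3 * (n : ℝ) - 2 ≤ (n : ℝ) ^ 2 := by
  rcases Nat.lt_or_ge n 3 with hn | hn
  · interval_cases n <;> norm_num
  · have h3 : (3 : ℝ) ≤ (n : ℝ) := by exact_mod_cast hn
    nlinarith

theorem stmt_4 {G : Type*} [AddCommGroup G] [Fintype G] [DecidableEq G]
    (m : ℕ) (hm : Fintype.card G = m) (A : Finset G)
    (h : ∀ g : G, repFn A g ≤ 5) :
    (((Finset.univ.filter fun g : G => repFn A g = 0).card : ℝ)) +
      ((Finset.univ.filter fun g : G => repFn A g = 4).card : ℝ) ≥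
      (1 / 2 : ℝ) * m - 3 * A.card + 1 / 2 := by
  classical
  subst hm
  have hm1 : 1 ≤ Fintype.card G := Fintype.card_pos
  -- Sum identities, cast to ℝ
  have hR1 : ∑ g : G, (repFn A g : ℝ) = (A.card : ℝ) ^ 2 := by
    rw [← Nat.cast_sum, sum_repFn]
    push_cast
    ring
  have hD1 : ∑ d : G, (diffFn A d : ℝ) = (A.card : ℝ) ^ 2 := by
    rw [← Nat.cast_sum, sum_diffFn]
    push_cast
    ring
  have hE : ∑ g : G, (repFn A g : ℝ) ^ 2 = ∑ d : G, (diffFn A d : ℝ) ^ 2 := by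
    exact_mod_cast energy_identity A
  -- Energy lower bound via differences
  have h0mem : (0 : G) ∈ (Finset.univ : Finset G) := Finset.mem_univ 0
  have hD0 : ((diffFn A 0 : ℕ) : ℝ) = (A.card : ℝ) := by
    exact_mod_cast diffFn_zero A
  have hsplit : ((diffFn A 0 : ℕ) : ℝ) + ∑ d ∈ Finset.univ.erase (0 : G), (diffFn A d : ℝ)
      = ∑ d : G, (diffFn A d : ℝ) :=
    Finset.add_sum_erase _ (fun d => (diffFn A d : ℝ)) h0mem
  have hsplit2 : ((diffFn A 0 : ℕ) : ℝ) ^ 2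
        + ∑ d ∈ Finset.univ.erase (0 : G), (diffFn A d : ℝ) ^ 2
      = ∑ d : G, (diffFn A d : ℝ) ^ 2 :=
    Finset.add_sum_erase _ (fun d => (diffFn A d : ℝ) ^ 2) h0mem
  have hcard_erase : (((Finset.univ.erase (0 : G)).card : ℕ) : ℝ)
      = (Fintype.card G : ℝ) - 1 := by
    rw [Finset.card_erase_of_mem h0mem, Finset.card_univ, Nat.cast_sub hm1]
    norm_num
  have herase_low : ∑ d ∈ Finset.univ.erase (0 : G), (3 * (diffFn A d : ℝ) - 2)
      ≤ ∑ d ∈ Finset.univ.erase (0 : G), (diffFn A d : ℝ) ^ 2 :=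
    Finset.sum_le_sum fun d _ => three_mul_sub_two_le_sq (diffFn A d)
  have herase_eval : ∑ d ∈ Finset.univ.erase (0 : G), (3 * (diffFn A d : ℝ) - 2)
      = 3 * ((A.card : ℝ) ^ 2 - (A.card : ℝ)) - 2 * ((Fintype.card G : ℝ) - 1) := by
    rw [Finset.sum_sub_distrib, ← Finset.mul_sum, Finset.sum_const, nsmul_eq_mul,
      hcard_erase]
    have : ∑ d ∈ Finset.univ.erase (0 : G), (diffFn A d : ℝ)
        = (A.card : ℝ) ^ 2 - (A.card : ℝ) := by
      have := hsplit
      rw [hD1, hD0] at this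
      linarith
    rw [this]
    ring
  have hElow : (A.card : ℝ) ^ 2 + (3 * ((A.card : ℝ) ^ 2 - (A.card : ℝ))
        - 2 * ((Fintype.card G : ℝ) - 1))
      ≤ ∑ g : G, (repFn A g : ℝ) ^ 2 := by
    rw [hE, ← hsplit2, hD0]
    have := herase_eval ▸ herase_low
    linarith
  -- Pointwise upper bound and summation
  have hpoint : ∀ g : G, ((repFn A g : ℝ) - 2) ^ 2 ≤
      (if repFn A g = 0 then (4 : ℝ) else 0) + (if repFn A g = 4 then (4 : ℝ) else 0)
        + (if Odd (repFn A g) then (9 : ℝ) else 0) := by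
    intro g
    have h5 := h g
    revert h5
    generalize repFn A g = r
    intro h5
    interval_cases r <;> norm_num [Nat.odd_iff]
  have hsum_ub : ∑ g : G, ((repFn A g : ℝ) - 2) ^ 2 ≤
      4 * ((Finset.univ.filter fun g : G => repFn A g = 0).card : ℝ)
      + 4 * ((Finset.univ.filter fun g : G => repFn A g = 4).card : ℝ)
      + 9 * ((Finset.univ.filter fun g : G => Odd (repFn A g)).card : ℝ) := by
    calc ∑ g : G, ((repFn A g : ℝ) - 2) ^ 2
        ≤ ∑ g : G, ((if repFn A g = 0 then (4 : ℝ) else 0)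
            + (if repFn A g = 4 then (4 : ℝ) else 0)
            + (if Odd (repFn A g) then (9 : ℝ) else 0)) :=
          Finset.sum_le_sum fun g _ => hpoint g
      _ = (∑ g : G, if repFn A g = 0 then (4 : ℝ) else 0)
            + (∑ g : G, if repFn A g = 4 then (4 : ℝ) else 0)
            + (∑ g : G, if Odd (repFn A g) then (9 : ℝ) else 0) := by
          rw [Finset.sum_add_distrib, Finset.sum_add_distrib]
      _ = 4 * ((Finset.univ.filter fun g : G => repFn A g = 0).card : ℝ)
            + 4 * ((Finset.univ.filter fun g : G => repFn A g = 4).card : ℝ)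
            + 9 * ((Finset.univ.filter fun g : G => Odd (repFn A g)).card : ℝ) := by
          rw [← Finset.sum_filter, ← Finset.sum_filter, ← Finset.sum_filter,
            Finset.sum_const, Finset.sum_const, Finset.sum_const,
            nsmul_eq_mul, nsmul_eq_mul, nsmul_eq_mul]
          ring
  have hodd_le : ((Finset.univ.filter fun g : G => Odd (repFn A g)).card : ℝ)
      ≤ (A.card : ℝ) := by exact_mod_cast card_odd_le A
  -- Expand the square sum
  have hexpand : ∑ g : G, ((repFn A g : ℝ) - 2) ^ 2
      = (∑ g : G, (repFn A g : ℝ) ^ 2) - 4 * (∑ g : G, (repFn A g : ℝ))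
        + 4 * (Fintype.card G : ℝ) := by
    have hterm : ∀ g : G, ((repFn A g : ℝ) - 2) ^ 2
        = (repFn A g : ℝ) ^ 2 - 4 * (repFn A g : ℝ) + 4 := fun g => by ring
    simp_rw [hterm]
    rw [Finset.sum_add_distrib, Finset.sum_sub_distrib, ← Finset.mul_sum,
      Finset.sum_const, Finset.card_univ, nsmul_eq_mul]
    ring
  rw [hR1] at hexpand
  linarith [hElow, hexpand ▸ hsum_ub]
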